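/- arXiv:0803.4117 — 3 statements merged into one kernel-verified Lean document; each statement's English description precedes it below -/
import Mathlib

section
/- Let G be a topological group and U an open neighborhood of the identity e. Then there exists a decreasing sequence (U_n) of open neighborhoods of e such that for every n and every bijection σ of {0,…,n}, the product U_{σ(0)} · U_{σ(1)} · ⋯ · U_{σ(n)} is contained in U. -/
open scoped Pointwise


/-- In a topological group, inside any open neighborhood `U` of the identity there is a
decreasing sequence of open neighborhoods `V n` of the identity such that for every `n`
and every permutation `σ` of `{0,…,n}` the product `V (σ 0) ⋯ V (σ n)` is contained in `U`. -/
theorem stmt1 {G : Type*} [Group G] [TopologicalSpace G] [IsTopologicalGroup G]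
    (U : Set G) (hU : IsOpen U) (heU : (1 : G) ∈ U) :
    ∃ V : ℕ → Set G, (∀ n, IsOpen (V n) ∧ (1 : G) ∈ V n) ∧ (∀ n, V (n + 1) ⊆ V n) ∧
      ∀ (n : ℕ) (σ : Equiv.Perm (Fin (n + 1))) (g : Fin (n + 1) → G),
        (∀ i, g i ∈ V (σ i)) → (List.ofFn g).prod ∈ U := by
  -- Step 1: for any open neighborhood S of 1 there is an open T with T*T*T ⊆ S.
  have key : ∀ S : Set G, IsOpen S → (1 : G) ∈ S →
      ∃ T : Set G, IsOpen T ∧ (1 : G) ∈ T ∧ T * T * T ⊆ S := by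
    intro S hS h1S
    obtain ⟨V, hVopen, h1V, hVV⟩ := exists_open_nhds_one_mul_subset (hS.mem_nhds h1S)
    obtain ⟨T, hTopen, h1T, hTT⟩ := exists_open_nhds_one_mul_subset (hVopen.mem_nhds h1V)
    refine ⟨T, hTopen, h1T, ?_⟩
    have hTV : T ⊆ V := fun x hx => by simpa using hTT (Set.mul_mem_mul hx h1T)
    intro x hx
    obtain ⟨a, ha, b, hb, rfl⟩ := hx
    obtain ⟨c, hc, d, hd, rfl⟩ := ha
    exact hVV (Set.mul_mem_mul (hTT (Set.mul_mem_mul hc hd)) (hTV hb))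
  choose f hf1 hf2 hf3 using key
  -- Step 2: build the sequence W with W 0 = U and W (k+1) ^ 3 ⊆ W k.
  let W : ℕ → {S : Set G // IsOpen S ∧ (1 : G) ∈ S} := fun n =>
    Nat.rec ⟨U, hU, heU⟩ (fun _ p => ⟨f p.1 p.2.1 p.2.2, hf1 _ _ _, hf2 _ _ _⟩) n
  have hWopen : ∀ n, IsOpen (W n).1 := fun n => (W n).2.1
  have hW1 : ∀ n, (1 : G) ∈ (W n).1 := fun n => (W n).2.2
  have hstep : ∀ n, (W (n + 1)).1 * (W (n + 1)).1 * (W (n + 1)).1 ⊆ (W n).1 :=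
    fun n => hf3 _ _ _
  have hsucc : ∀ n, (W (n + 1)).1 ⊆ (W n).1 := by
    intro n x hx
    have : x * 1 * 1 ∈ (W n).1 :=
      hstep n (Set.mul_mem_mul (Set.mul_mem_mul hx (hW1 (n+1))) (hW1 (n+1)))
    simpa using this
  have hanti : ∀ m n, m ≤ n → (W n).1 ⊆ (W m).1 := by
    intro m n h
    induction h with
    | refl => exact fun _ h => h
    | step _ ih => exact fun x hx => ih (hsucc _ hx)
  -- Step 3: combinatorial lemma.
  have main : ∀ N (l : List (ℕ × G)), l.length ≤ N →
      (∀ p ∈ l, p.2 ∈ (W p.1).1) → (l.map Prod.fst).Nodup →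
      ∀ m, (∀ p ∈ l, m + 1 ≤ p.1) → (l.map Prod.snd).prod ∈ (W m).1 := by
    intro N
    induction N with
    | zero =>
      intro l hlen _ _ m _
      have : l = [] := List.length_eq_zero_iff.mp (Nat.le_zero.mp hlen)
      subst this
      simpa using hW1 m
    | succ N ih =>
      intro l hlen hmem hnd m hge
      rcases eq_or_ne l [] with rfl | hne
      · simpa using hW1 m
      -- pick an element with minimal index
      obtain ⟨p, hparg⟩ : ∃ p, l.argmin Prod.fst = some p :=
        Option.ne_none_iff_exists'.mp (fun h => hne (List.argmin_eq_none.mp h))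
      have hpl : p ∈ l := List.argmin_mem hparg
      have hpmin : ∀ q ∈ l, p.1 ≤ q.1 := fun q hq => List.le_of_mem_argmin hq hparg
      obtain ⟨A, B, rfl⟩ := List.append_of_mem hpl
      rw [List.map_append, List.map_cons, List.nodup_append] at hnd
      have hndA : ((A.map Prod.fst).Nodup) ∧ ((B.map Prod.fst).Nodup) ∧
          (∀ q ∈ A, q.1 ≠ p.1) ∧ (∀ q ∈ B, q.1 ≠ p.1) := by
        refine ⟨hnd.1, (List.nodup_cons.mp hnd.2.1).2, ?_, ?_⟩
        · intro q hq hqp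
          exact hnd.2.2 _ (List.mem_map_of_mem (f := Prod.fst) hq) _ (by simp) hqp
        · intro q hq hqp
          exact (List.nodup_cons.mp hnd.2.1).1 (hqp ▸ List.mem_map_of_mem (f := Prod.fst) hq)
      have hgeA : ∀ q ∈ A, p.1 + 1 ≤ q.1 := fun q hq =>
        lt_of_le_of_ne (hpmin q (by simp [hq])) (Ne.symm (hndA.2.2.1 q hq))
      have hgeB : ∀ q ∈ B, p.1 + 1 ≤ q.1 := fun q hq =>
        lt_of_le_of_ne (hpmin q (by simp [hq])) (Ne.symm (hndA.2.2.2 q hq))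
      have hlenA : A.length ≤ N := by
        have := hlen; simp only [List.length_append, List.length_cons] at this; omega
      have hlenB : B.length ≤ N := by
        have := hlen; simp only [List.length_append, List.length_cons] at this; omega
      have hA : (A.map Prod.snd).prod ∈ (W p.1).1 :=
        ih A hlenA (fun q hq => hmem q (by simp [hq])) hndA.1 p.1 hgeA
      have hB : (B.map Prod.snd).prod ∈ (W p.1).1 :=
        ih B hlenB (fun q hq => hmem q (by simp [hq])) hndA.2.1 p.1 hgeB
      have hp2 : p.2 ∈ (W p.1).1 := hmem p hpl
      -- the total product
      have hprod : ((A ++ p :: B).map Prod.snd).prod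
          = (A.map Prod.snd).prod * p.2 * (B.map Prod.snd).prod := by
        simp [List.prod_append, mul_assoc]
      rw [hprod]
      obtain ⟨k, hk⟩ : ∃ k, p.1 = k + 1 := ⟨p.1 - 1, by have := hge p hpl; omega⟩
      have hmk : m ≤ k := by have := hge p hpl; omega
      apply hanti m k hmk
      apply hstep k
      rw [hk] at hA hB hp2
      exact Set.mul_mem_mul (Set.mul_mem_mul hA hp2) hB
  -- Step 4: conclude with V n = W (n+1).
  refine ⟨fun n => (W (n + 1)).1, fun n => ⟨hWopen (n+1), hW1 (n+1)⟩,
    fun n => hsucc (n + 1), ?_⟩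
  intro n σ g hg
  set l : List (ℕ × G) := List.ofFn (fun i : Fin (n + 1) => (((σ i : ℕ) + 1), g i)) with hl
  have hmap2 : l.map Prod.snd = List.ofFn g := by
    simp [hl, List.map_ofFn, Function.comp_def]
  have hmap1 : l.map Prod.fst = List.ofFn (fun i : Fin (n + 1) => (σ i : ℕ) + 1) := by
    simp [hl, List.map_ofFn, Function.comp_def]
  have hnd : (l.map Prod.fst).Nodup := by
    rw [hmap1, List.nodup_ofFn]
    intro i j hij
    simp only [Nat.succ_inj] at hij
    exact σ.injective (Fin.val_injective hij)
  have hmem : ∀ p ∈ l, p.2 ∈ (W p.1).1 := by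
    intro p hp
    rw [hl, List.mem_ofFn] at hp
    obtain ⟨i, rfl⟩ := hp
    exact hg i
  have hge : ∀ p ∈ l, 0 + 1 ≤ p.1 := by
    intro p hp
    rw [hl, List.mem_ofFn] at hp
    obtain ⟨i, rfl⟩ := hp
    simp
  have := main l.length l le_rfl hmem hnd 0 hge
  rw [hmap2] at this
  exact this
end

section
/- Let G be a topological group admitting a functorial embedding j : [0,1] → G, and let ℐ be a usual Cantor scheme with J_∅ = [0,1]. Then for all natural numbers n ≠ m, the sets z_n((0,1]) and z_m((0,1]) are disjoint, where z_n : [0,1] → G is the map sending 0 to the identity and ξ ∈ (0,1] to the alternating product π₋ of the endpoints of the family ℐ_{n,ξ}. -/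
open Set Topology Filter

/-- A usual Cantor scheme, given by the endpoint functions of the intervals
`J_s = [a s, b s]`, indexed by finite binary sequences (lists of booleans),
where `s ++ [false]` is `s⌢0` and `s ++ [true]` is `s⌢1`. -/
structure CantorScheme where
  a : List Bool → ℝ
  b : List Bool → ℝ
  left_min : ∀ s, a (s ++ [false]) = a s
  right_max : ∀ s, b (s ++ [true]) = b s
  lt1 : ∀ s, a (s ++ [false]) < b (s ++ [false])
  lt2 : ∀ s, b (s ++ [false]) < a (s ++ [true])
  lt3 : ∀ s, a (s ++ [true]) < b (s ++ [true])
  diam_tendsto : ∀ f : ℕ → Bool,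
    Filter.Tendsto (fun n => b (List.ofFn fun i : Fin n => f i) - a (List.ofFn fun i : Fin n => f i))
      Filter.atTop (nhds 0)

/-- For `ξ ∈ (0,1]`, the unique `k` with `3^{-(k+1)} < ξ ≤ 3^{-k}`. -/
noncomputable def scaleIndex (ξ : ℝ) : ℕ := ⌊-Real.logb 3 ξ⌋₊

/-- The piecewise linear map `left_s : [0,1] → J_s` with `left_s 0 = min J_s`,
`left_s (1/3^k) = max J_{s⌢0^{k+1}}`, linear on each `[1/3^{k+1}, 1/3^k]`. -/
noncomputable def CantorScheme.leftMap (C : CantorScheme) (s : List Bool) (ξ : ℝ) : ℝ :=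
  if ξ ≤ 0 then C.a s
  else
    let k := scaleIndex ξ
    let x0 : ℝ := (3:ℝ)⁻¹ ^ (k + 1)
    let x1 : ℝ := (3:ℝ)⁻¹ ^ k
    let y0 := C.b (s ++ List.replicate (k + 2) false)
    let y1 := C.b (s ++ List.replicate (k + 1) false)
    y0 + (ξ - x0) / (x1 - x0) * (y1 - y0)

/-- The piecewise linear map `right_s : [0,1] → J_s` with `right_s 0 = max J_s`,
`right_s (1/3^k) = min J_{s⌢1^{k+1}}`, linear on each `[1/3^{k+1}, 1/3^k]`. -/
noncomputable def CantorScheme.rightMap (C : CantorScheme) (s : List Bool) (ξ : ℝ) : ℝ :=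
  if ξ ≤ 0 then C.b s
  else
    let k := scaleIndex ξ
    let x0 : ℝ := (3:ℝ)⁻¹ ^ (k + 1)
    let x1 : ℝ := (3:ℝ)⁻¹ ^ k
    let y0 := C.a (s ++ List.replicate (k + 2) true)
    let y1 := C.a (s ++ List.replicate (k + 1) true)
    y0 + (ξ - x0) / (x1 - x0) * (y1 - y0)

/-- The set `∂ℐ_{n,ξ}` of endpoints of the intervals
`left_s([0,ξ]) = [min J_s, left_s ξ]` and `right_s([0,ξ]) = [right_s ξ, max J_s]`,
for `s` ranging over binary sequences of length `n`. -/
noncomputable def CantorScheme.boundary (C : CantorScheme) (n : ℕ) (ξ : ℝ) : Finset ℝ :=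
  Finset.image
    (fun p : (Fin n → Bool) × Fin 4 =>
      ![C.a (List.ofFn p.1), C.leftMap (List.ofFn p.1) ξ,
        C.rightMap (List.ofFn p.1) ξ, C.b (List.ofFn p.1)] p.2)
    Finset.univ

/-- Alternating product `j x₁^{±1} j x₂^{∓1} ⋯` along a list, starting with the sign
given by the boolean (`false` = inverse first). -/
def altProd {G : Type*} [Group G] (j : ℝ → G) : Bool → List ℝ → G
  | _, [] => 1
  | sgn, x :: l => (if sgn then j x else (j x)⁻¹) * altProd j (!sgn) l

/-- `π₋(X) = j x₁⁻¹ · j x₂ · j x₃⁻¹ ⋯` where `x₁ < x₂ < ⋯` enumerates the finite set `X`. -/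
noncomputable def piMinus {G : Type*} [Group G] (j : ℝ → G) (X : Finset ℝ) : G :=
  altProd j false (X.sort (· ≤ ·))

/-- The map `z_n : [0,1] → G`, `z_n 0 = e`, `z_n ξ = π₋(∂ℐ_{n,ξ})` for `ξ > 0`. -/
noncomputable def CantorScheme.z {G : Type*} [Group G] (C : CantorScheme) (j : ℝ → G)
    (n : ℕ) (ξ : ℝ) : G :=
  if ξ ≤ 0 then 1 else piMinus j (C.boundary n ξ)

/-- `j` is a functorial embedding of `[0,1]` into the topological group `G`:
a topological embedding of `[0,1]` such that every autohomeomorphism `h` of `[0,1]`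
extends to a continuous group homomorphism `H : G → G` with `H ∘ j = j ∘ h`. -/
def FunctorialEmbedding {G : Type*} [Group G] [TopologicalSpace G] (j : ℝ → G) : Prop :=
  Topology.IsEmbedding ((Set.Icc (0:ℝ) 1).restrict j) ∧
  ∀ h : Set.Icc (0:ℝ) 1 ≃ₜ Set.Icc (0:ℝ) 1,
    ∃ H : G →* G, Continuous H ∧ ∀ x : Set.Icc (0:ℝ) 1, H (j x) = j (h x)


/-! ### Auxiliary lemmas -/

section AltProdLemmas

lemma altProd_congr {G : Type*} [Group G] {f g : ℝ → G} :
    ∀ (L : List ℝ) (s : Bool), (∀ x ∈ L, f x = g x) → altProd f s L = altProd g s L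
  | [], _, _ => rfl
  | x :: L, s, h => by
    simp only [altProd, h x (List.mem_cons_self ..),
      altProd_congr L (!s) (fun z hz => h z (List.mem_cons_of_mem _ hz))]

lemma altProd_hom {G : Type*} [Group G] (H : G →* G) (j : ℝ → G) :
    ∀ (L : List ℝ) (s : Bool), H (altProd j s L) = altProd (H ∘ j) s L
  | [], _ => map_one H
  | x :: L, s => by
    simp only [altProd, map_mul, altProd_hom H j L (!s)]
    cases s <;> simp [map_inv]

lemma altProd_map {G : Type*} [Group G] (j : ℝ → G) (φ : ℝ → ℝ) :
    ∀ (L : List ℝ) (s : Bool), altProd j s (L.map φ) = altProd (j ∘ φ) s L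
  | [], _ => rfl
  | x :: L, s => by simp only [List.map_cons, altProd, altProd_map j φ L (!s)]; rfl

lemma altProd_cancel {G : Type*} [Group G] (j : ℝ → G) :
    ∀ (A : List ℝ) (s : Bool) (x x' : ℝ) (B : List ℝ),
      altProd j s (A ++ x :: B) = altProd j s (A ++ x' :: B) → j x = j x'
  | [], s, x, x', B, h => by
    simp only [List.nil_append, altProd] at h
    have h2 := mul_right_cancel h
    cases s <;> simpa using h2
  | a :: A, s, x, x', B, h => by
    simp only [List.cons_append, altProd] at h
    exact altProd_cancel j A (!s) x x' B (mul_left_cancel h)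

lemma list_map_fix {φ : ℝ → ℝ} : ∀ (L : List ℝ), (∀ x ∈ L, φ x = x) → L.map φ = L
  | [], _ => rfl
  | x :: L, h => by
    simp only [List.map_cons, h x (List.mem_cons_self ..),
      list_map_fix L (fun z hz => h z (List.mem_cons_of_mem _ hz))]

end AltProdLemmas

section PlSection

/-- Piecewise linear autohomeomorphism of the line: identity outside `[p,q]`,
sending `y ↦ y'`, linear on `[p,y]` and `[y,q]`. -/
noncomputable def pl (p y q y' x : ℝ) : ℝ :=
  if x ≤ p then x
  else if x ≤ y then p + (x - p) * ((y' - p) / (y - p))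
  else if x ≤ q then q + (x - q) * ((q - y') / (q - y))
  else x

variable {p y q y' : ℝ}

lemma pl_of_le (x : ℝ) (h : x ≤ p) : pl p y q y' x = x := if_pos h

lemma pl_of_ge (hyq : y < q) (x : ℝ) (h : q ≤ x) : pl p y q y' x = x := by
  unfold pl
  split_ifs with h1 h2 h3
  · rfl
  · linarith
  · have : x = q := le_antisymm h3 h
    rw [this]; ring
  · rfl

lemma pl_y (hpy : p < y) : pl p y q y' y = y' := by
  have hyp : y - p ≠ 0 := by linarith
  unfold pl
  rw [if_neg (by linarith), if_pos le_rfl]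
  field_simp
  ring

set_option maxHeartbeats 1000000 in
lemma pl_strictMono (hpy : p < y) (hyq : y < q) (hpy' : p < y') (hy'q : y' < q) :
    StrictMono (pl p y q y') := by
  have hyp : y - p ≠ 0 := by linarith
  have hqy : q - y ≠ 0 := by linarith
  have hc1 : 0 < (y' - p) / (y - p) := div_pos (by linarith) (by linarith)
  have hc2 : 0 < (q - y') / (q - y) := div_pos (by linarith) (by linarith)
  have e1 : (y - p) * ((y' - p) / (y - p)) = y' - p := by field_simp
  have e2 : (q - y) * ((q - y') / (q - y)) = q - y' := by field_simp
  intro x1 x2 hx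
  unfold pl
  split_ifs <;>
    nlinarith [hc1, hc2, e1, e2, mul_pos (sub_pos.mpr hx) hc1, mul_pos (sub_pos.mpr hx) hc2]

set_option maxHeartbeats 1000000 in
lemma pl_pl (hpy : p < y) (hyq : y < q) (hpy' : p < y') (hy'q : y' < q) (x : ℝ) :
    pl p y q y' (pl p y' q y x) = x := by
  have hyp : y - p ≠ 0 := by linarith
  have hy'p : y' - p ≠ 0 := by linarith
  have hqy : q - y ≠ 0 := by linarith
  have hqy' : q - y' ≠ 0 := by linarith
  have hc1 : 0 < (y - p) / (y' - p) := div_pos (by linarith) (by linarith)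
  have hc2 : 0 < (q - y) / (q - y') := div_pos (by linarith) (by linarith)
  have e1 : (y' - p) * ((y - p) / (y' - p)) = y - p := by field_simp
  have e2 : (q - y') * ((q - y) / (q - y')) = q - y := by field_simp
  unfold pl
  split_ifs <;> first
    | rfl
    | (exfalso; nlinarith [hc1, hc2, e1, e2])
    | (field_simp; ring)

lemma pl_continuous (hpy : p < y) (hyq : y < q) (hpy' : p < y') (hy'q : y' < q) :
    Continuous (pl p y q y') := by
  have hsurj : Function.Surjective (pl p y q y') :=
    fun z => ⟨pl p y' q y z, pl_pl hpy hyq hpy' hy'q z⟩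
  exact (StrictMono.orderIsoOfSurjective _ (pl_strictMono hpy hyq hpy' hy'q)
    hsurj).toHomeomorph.continuous

lemma pl_mem_Icc (hpy : p < y) (hyq : y < q) (hpy' : p < y') (hy'q : y' < q)
    (h0 : 0 ≤ p) (h1 : q ≤ 1) {x : ℝ} (hx : x ∈ Set.Icc (0:ℝ) 1) :
    pl p y q y' x ∈ Set.Icc (0:ℝ) 1 := by
  have m := pl_strictMono hpy hyq hpy' hy'q (p := p)
  constructor
  · have := m.monotone hx.1
    rwa [pl_of_le 0 h0] at this
  · have := m.monotone hx.2
    rwa [pl_of_ge hyq 1 h1] at this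

noncomputable def plHomeo (p y q y' : ℝ) (hpy : p < y) (hyq : y < q) (hpy' : p < y')
    (hy'q : y' < q) (h0 : 0 ≤ p) (h1 : q ≤ 1) : Set.Icc (0:ℝ) 1 ≃ₜ Set.Icc (0:ℝ) 1 where
  toFun x := ⟨pl p y q y' x, pl_mem_Icc hpy hyq hpy' hy'q h0 h1 x.2⟩
  invFun x := ⟨pl p y' q y x, pl_mem_Icc hpy' hy'q hpy hyq h0 h1 x.2⟩
  left_inv x := Subtype.ext (pl_pl hpy' hy'q hpy hyq x)
  right_inv x := Subtype.ext (pl_pl hpy hyq hpy' hy'q x)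
  continuous_toFun :=
    ((pl_continuous hpy hyq hpy' hy'q).comp continuous_subtype_val).subtype_mk _
  continuous_invFun :=
    ((pl_continuous hpy' hy'q hpy hyq).comp continuous_subtype_val).subtype_mk _

end PlSection

section CantorLemmas

namespace CantorScheme
variable (C : CantorScheme)

lemma a_lt_b (s : List Bool) : C.a s < C.b s := by
  have h1 := C.left_min s
  have h2 := C.right_max s
  have := C.lt1 s; have := C.lt2 s; have := C.lt3 s
  linarith

lemma b_false_lt (s : List Bool) : C.b (s ++ [false]) < C.b s := by
  have := C.lt2 s; have := C.lt3 s; have := C.right_max s; linarith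

lemma a_lt_true (s : List Bool) : C.a s < C.a (s ++ [true]) := by
  have := C.lt1 s; have := C.lt2 s; have := C.left_min s; linarith

lemma a_le_append : ∀ (t s : List Bool), C.a s ≤ C.a (s ++ t)
  | [], s => by simp
  | x :: t, s => by
    have h1 : C.a s ≤ C.a (s ++ [x]) := by
      cases x
      · exact (C.left_min s).symm.le
      · exact (C.a_lt_true s).le
    have h2 := a_le_append t (s ++ [x])
    rw [List.append_assoc, List.singleton_append] at h2
    exact h1.trans h2

lemma b_append_le : ∀ (t s : List Bool), C.b (s ++ t) ≤ C.b s
  | [], s => by simp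
  | x :: t, s => by
    have h1 : C.b (s ++ [x]) ≤ C.b s := by
      cases x
      · exact (C.b_false_lt s).le
      · exact (C.right_max s).le
    have h2 := b_append_le t (s ++ [x])
    simp only [List.append_assoc, List.singleton_append] at h2
    exact h2.trans h1

lemma a_replicate_false (s : List Bool) : ∀ k, C.a (s ++ List.replicate k false) = C.a s
  | 0 => by simp
  | k + 1 => by
    rw [List.replicate_succ', ← List.append_assoc, C.left_min, a_replicate_false s k]

lemma b_replicate_true (s : List Bool) : ∀ k, C.b (s ++ List.replicate k true) = C.b s
  | 0 => by simp
  | k + 1 => by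
    rw [List.replicate_succ', ← List.append_assoc, C.right_max, b_replicate_true s k]

lemma sep (u v w : List Bool) : C.b (u ++ false :: v) < C.a (u ++ true :: w) := by
  have h1 : C.b (u ++ false :: v) ≤ C.b (u ++ [false]) := by
    have := C.b_append_le v (u ++ [false])
    simpa using this
  have h2 : C.a (u ++ [true]) ≤ C.a (u ++ true :: w) := by
    have := C.a_le_append w (u ++ [true])
    simpa using this
  have := C.lt2 u
  linarith

end CantorScheme

lemma list_split : ∀ (s t : List Bool), s.length = t.length → s ≠ t →
    ∃ u v w, (s = u ++ false :: v ∧ t = u ++ true :: w) ∨ (s = u ++ true :: v ∧ t = u ++ false :: w)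
  | [], [], _, hne => absurd rfl hne
  | [], _ :: _, hlen, _ => by simp at hlen
  | _ :: _, [], hlen, _ => by simp at hlen
  | x :: ss, y :: ts, hlen, hne => by
    by_cases hxy : x = y
    · subst hxy
      have hne' : ss ≠ ts := fun h => hne (by rw [h])
      obtain ⟨u, v, w, hc⟩ := list_split ss ts (by simpa using hlen) hne'
      exact ⟨x :: u, v, w, by rcases hc with ⟨h1, h2⟩ | ⟨h1, h2⟩ <;>
        [left; right] <;> simp [h1, h2]⟩
    · cases x <;> cases y
      · simp at hxy
      · exact ⟨[], ss, ts, Or.inl ⟨rfl, rfl⟩⟩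
      · exact ⟨[], ss, ts, Or.inr ⟨rfl, rfl⟩⟩
      · simp at hxy

lemma scaleIndex_bounds {ξ : ℝ} (h0 : 0 < ξ) (h1 : ξ ≤ 1) :
    (3:ℝ)⁻¹ ^ (scaleIndex ξ + 1) < ξ ∧ ξ ≤ (3:ℝ)⁻¹ ^ scaleIndex ξ := by
  have h3 : (1:ℝ) < 3 := by norm_num
  have hlog : Real.logb 3 ξ ≤ 0 := Real.logb_nonpos h3 h0.le h1
  have hfl : (scaleIndex ξ : ℝ) ≤ -Real.logb 3 ξ := Nat.floor_le (by linarith)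
  have hfl2 : -Real.logb 3 ξ < scaleIndex ξ + 1 := Nat.lt_floor_add_one _
  have key : ∀ k : ℕ, (3:ℝ)⁻¹ ^ k = (3:ℝ) ^ (-(k:ℝ)) := by
    intro k
    rw [Real.rpow_neg (by norm_num), Real.rpow_natCast, inv_pow]
  have hxi : ξ = (3:ℝ) ^ (Real.logb 3 ξ) := (Real.rpow_logb (by norm_num) (by norm_num) h0).symm
  set k := scaleIndex ξ with hk
  constructor
  · rw [key]
    nth_rewrite 1 [hxi]
    apply Real.rpow_lt_rpow_left_iff h3 |>.mpr
    push_cast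
    linarith
  · rw [key]
    nth_rewrite 1 [hxi]
    apply Real.rpow_le_rpow_left_iff h3 |>.mpr
    linarith

namespace CantorScheme
variable (C : CantorScheme)

lemma chain (s : List Bool) {ξ : ℝ} (h0 : 0 < ξ) (h1 : ξ ≤ 1) :
    C.a s < C.leftMap s ξ ∧ C.leftMap s ξ < C.rightMap s ξ ∧ C.rightMap s ξ < C.b s := by
  obtain ⟨hx0, hx1⟩ := scaleIndex_bounds h0 h1
  set k := scaleIndex ξ with hk
  have hxx : (3:ℝ)⁻¹ ^ (k+1) < (3:ℝ)⁻¹ ^ k :=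
    pow_lt_pow_right_of_lt_one₀ (by norm_num) (by norm_num) (lt_add_one k)
  set x0 : ℝ := (3:ℝ)⁻¹ ^ (k+1) with hx0def
  set x1 : ℝ := (3:ℝ)⁻¹ ^ k with hx1def
  have hμ0 : 0 < (ξ - x0) / (x1 - x0) := div_pos (by linarith) (by linarith)
  have hμ1 : (ξ - x0) / (x1 - x0) ≤ 1 := by
    rw [div_le_one (by linarith)]; linarith
  set μ := (ξ - x0) / (x1 - x0) with hμ
  have hL : C.leftMap s ξ = C.b (s ++ List.replicate (k+2) false)
      + μ * (C.b (s ++ List.replicate (k+1) false) - C.b (s ++ List.replicate (k+2) false)) := by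
    rw [CantorScheme.leftMap, if_neg (not_le.2 h0)]
  have hR : C.rightMap s ξ = C.a (s ++ List.replicate (k+2) true)
      + μ * (C.a (s ++ List.replicate (k+1) true) - C.a (s ++ List.replicate (k+2) true)) := by
    rw [CantorScheme.rightMap, if_neg (not_le.2 h0)]
  have hsplitf : s ++ List.replicate (k+2) false = (s ++ List.replicate (k+1) false) ++ [false] := by
    rw [List.append_assoc]
    congr 1
    exact List.replicate_succ' (n := k+1) (a := false)
  have hsplitt : s ++ List.replicate (k+2) true = (s ++ List.replicate (k+1) true) ++ [true] := by
    rw [List.append_assoc]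
    congr 1
    exact List.replicate_succ' (n := k+1) (a := true)
  have hy01 : C.b (s ++ List.replicate (k+2) false) < C.b (s ++ List.replicate (k+1) false) := by
    rw [hsplitf]; exact C.b_false_lt _
  have hy01' : C.a (s ++ List.replicate (k+1) true) < C.a (s ++ List.replicate (k+2) true) := by
    rw [hsplitt]; exact C.a_lt_true _
  have hcons_f : s ++ List.replicate (k+1) false = (s ++ [false]) ++ List.replicate k false := by
    rw [List.replicate_succ, List.append_cons]
  have hcons_t : s ++ List.replicate (k+1) true = (s ++ [true]) ++ List.replicate k true := by
    rw [List.replicate_succ, List.append_cons]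
  have hb1 : C.b (s ++ List.replicate (k+1) false) ≤ C.b (s ++ [false]) := by
    rw [hcons_f]; exact C.b_append_le _ _
  have ha1 : C.a (s ++ [true]) ≤ C.a (s ++ List.replicate (k+1) true) := by
    rw [hcons_t]; exact C.a_le_append _ _
  have hmid := C.lt2 s
  have haeq : C.a (s ++ List.replicate (k+2) false) = C.a s := C.a_replicate_false s (k+2)
  have hab0 := C.a_lt_b (s ++ List.replicate (k+2) false)
  have hab1 := C.a_lt_b (s ++ List.replicate (k+2) true)
  have hble : C.b (s ++ List.replicate (k+2) true) ≤ C.b s := C.b_append_le _ _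
  refine ⟨?_, ?_, ?_⟩
  · rw [hL]; nlinarith
  · rw [hL, hR]; nlinarith
  · rw [hR]; nlinarith

lemma point_mem {ξ : ℝ} (h0 : 0 < ξ) (h1 : ξ ≤ 1) (r : List Bool) (i : Fin 4) :
    ![C.a r, C.leftMap r ξ, C.rightMap r ξ, C.b r] i ∈ Set.Icc (C.a r) (C.b r) := by
  obtain ⟨c1, c2, c3⟩ := C.chain r h0 h1
  have hab := C.a_lt_b r
  fin_cases i <;> constructor <;> simp <;> linarith

lemma boundary_inj (n : ℕ) {ξ : ℝ} (h0 : 0 < ξ) (h1 : ξ ≤ 1) :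
    Function.Injective (fun p : (Fin n → Bool) × Fin 4 =>
      ![C.a (List.ofFn p.1), C.leftMap (List.ofFn p.1) ξ,
        C.rightMap (List.ofFn p.1) ξ, C.b (List.ofFn p.1)] p.2) := by
  rintro ⟨s, i⟩ ⟨t, i'⟩ h
  simp only at h
  by_cases hst : s = t
  · subst hst
    suffices hii : i = i' by rw [hii]
    obtain ⟨c1, c2, c3⟩ := C.chain (List.ofFn s) h0 h1
    fin_cases i <;> fin_cases i' <;> simp_all <;> linarith
  · exfalso
    have hne : List.ofFn s ≠ List.ofFn t := fun hh => hst (List.ofFn_injective hh)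
    obtain ⟨u, v, w, hcase⟩ := list_split _ _ (by simp) hne
    have Hs := C.point_mem h0 h1 (List.ofFn s) i
    have Ht := C.point_mem h0 h1 (List.ofFn t) i'
    rcases hcase with ⟨e1, e2⟩ | ⟨e1, e2⟩
    · have hsep := C.sep u v w
      rw [← e1, ← e2] at hsep
      linarith [Hs.2, Ht.1]
    · have hsep := C.sep u w v
      rw [← e1, ← e2] at hsep
      linarith [Hs.1, Ht.2]

lemma boundary_card (n : ℕ) {ξ : ℝ} (h0 : 0 < ξ) (h1 : ξ ≤ 1) :
    (C.boundary n ξ).card = 2 ^ (n + 2) := by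
  rw [CantorScheme.boundary, Finset.card_image_of_injective _ (C.boundary_inj n h0 h1),
    Finset.card_univ]
  simp [Fintype.card_prod]
  ring

lemma boundary_subset (h0' : C.a [] = 0) (h1' : C.b [] = 1) (n : ℕ) {ξ : ℝ}
    (h0 : 0 < ξ) (h1 : ξ ≤ 1) : ↑(C.boundary n ξ) ⊆ Set.Icc (0:ℝ) 1 := by
  intro x hx
  simp only [CantorScheme.boundary, Finset.coe_image, Set.mem_image] at hx
  obtain ⟨⟨s, i⟩, -, rfl⟩ := hx
  have hpt := C.point_mem h0 h1 (List.ofFn s) i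
  have ha : C.a [] ≤ C.a (List.ofFn s) := by
    have := C.a_le_append (List.ofFn s) []
    simpa using this
  have hb : C.b (List.ofFn s) ≤ C.b [] := by
    have := C.b_append_le (List.ofFn s) []
    simpa using this
  constructor
  · rw [← h0']; exact le_trans ha hpt.1
  · rw [← h1']; exact le_trans hpt.2 hb

lemma zero_mem_boundary (h0' : C.a [] = 0) (n : ℕ) (ξ : ℝ) : (0:ℝ) ∈ C.boundary n ξ := by
  rw [CantorScheme.boundary, Finset.mem_image]
  refine ⟨⟨fun _ => false, 0⟩, Finset.mem_univ _, ?_⟩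
  show C.a (List.ofFn fun _ : Fin n => false) = 0
  rw [List.ofFn_const]
  have := C.a_replicate_false [] n
  simpa [h0'] using this

lemma one_mem_boundary (h1' : C.b [] = 1) (n : ℕ) (ξ : ℝ) : (1:ℝ) ∈ C.boundary n ξ := by
  rw [CantorScheme.boundary, Finset.mem_image]
  refine ⟨⟨fun _ => true, 3⟩, Finset.mem_univ _, ?_⟩
  show C.b (List.ofFn fun _ : Fin n => true) = 1
  rw [List.ofFn_const]
  have := C.b_replicate_true [] n
  simpa [h1'] using this

end CantorScheme

end CantorLemmas

section KeyLemma

lemma key_lemma {G : Type*} [Group G] [TopologicalSpace G] (j : ℝ → G)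
    (hj : FunctorialEmbedding j) (X Y : Finset ℝ)
    (hX : ↑X ⊆ Set.Icc (0:ℝ) 1) (hY : ↑Y ⊆ Set.Icc (0:ℝ) 1)
    (h0X : (0:ℝ) ∈ X) (h1X : (1:ℝ) ∈ X)
    (y : ℝ) (hyY : y ∈ Y) (hyX : y ∉ X)
    (heq : piMinus j X = piMinus j Y) : False := by
  have hy01 : y ∈ Set.Icc (0:ℝ) 1 := hY (Finset.mem_coe.2 hyY)
  have hy0 : 0 < y := lt_of_le_of_ne hy01.1 (fun h => hyX (h ▸ h0X))
  have hy1 : y < 1 := lt_of_le_of_ne hy01.2 (fun h => hyX (h.symm ▸ h1X))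
  set F : Finset ℝ := (X ∪ Y).erase y with hF
  have h0F : (0:ℝ) ∈ F :=
    Finset.mem_erase.2 ⟨hy0.ne, Finset.mem_union_left _ h0X⟩
  have h1F : (1:ℝ) ∈ F :=
    Finset.mem_erase.2 ⟨hy1.ne', Finset.mem_union_left _ h1X⟩
  have hPlne : ((F.filter (· < y)) : Finset ℝ).Nonempty :=
    ⟨0, Finset.mem_filter.2 ⟨h0F, hy0⟩⟩
  have hPrne : ((F.filter (y < ·)) : Finset ℝ).Nonempty :=
    ⟨1, Finset.mem_filter.2 ⟨h1F, hy1⟩⟩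
  set p := (F.filter (· < y)).max' hPlne with hp
  set q := (F.filter (y < ·)).min' hPrne with hq
  have hp_lt : p < y := (Finset.mem_filter.1 ((F.filter (· < y)).max'_mem hPlne)).2
  have hq_gt : y < q := (Finset.mem_filter.1 ((F.filter (y < ·)).min'_mem hPrne)).2
  have hp0 : 0 ≤ p := Finset.le_max' (F.filter (· < y)) 0 (Finset.mem_filter.2 ⟨h0F, hy0⟩)
  have hq1 : q ≤ 1 := Finset.min'_le (F.filter (y < ·)) 1 (Finset.mem_filter.2 ⟨h1F, hy1⟩)
  set y' := (y + q) / 2 with hy'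
  have hyy' : y < y' := by rw [hy']; linarith
  have hy'q : y' < q := by rw [hy']; linarith
  have hpy' : p < y' := lt_trans hp_lt hyy'
  have hfix : ∀ f ∈ F, pl p y q y' f = f := by
    intro f hf
    rcases lt_trichotomy f y with hlt | heqf | hgt
    · exact pl_of_le f (Finset.le_max' (F.filter (· < y)) f (Finset.mem_filter.2 ⟨hf, hlt⟩))
    · exact absurd heqf (Finset.mem_erase.1 hf).1
    · exact pl_of_ge hq_gt f (Finset.min'_le (F.filter (y < ·)) f (Finset.mem_filter.2 ⟨hf, hgt⟩))
  obtain ⟨H, -, hH⟩ := hj.2 (plHomeo p y q y' hp_lt hq_gt hpy' hy'q hp0 hq1)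
  have hHj : ∀ r ∈ Set.Icc (0:ℝ) 1, H (j r) = j (pl p y q y' r) := fun r hr => hH ⟨r, hr⟩
  -- the X side is fixed by H
  have hXfix : ∀ x ∈ X.sort (· ≤ ·), pl p y q y' x = x := by
    intro x hx
    have hxX : x ∈ X := (Finset.mem_sort _).1 hx
    exact hfix x (Finset.mem_erase.2
      ⟨fun h => hyX (h ▸ hxX), Finset.mem_union_left _ hxX⟩)
  have HX : H (piMinus j X) = piMinus j X := by
    rw [piMinus, altProd_hom]
    rw [altProd_congr (f := H ∘ j) (g := j ∘ pl p y q y') (X.sort (· ≤ ·)) false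
      (fun x hx => hHj x (hX (Finset.mem_coe.2 ((Finset.mem_sort _).1 hx))))]
    rw [← altProd_map, list_map_fix _ hXfix]
  -- the Y side
  have hys : y ∈ Y.sort (· ≤ ·) := (Finset.mem_sort _).2 hyY
  obtain ⟨A, B, hAB⟩ := List.append_of_mem hys
  have hsorted : (Y.sort (· ≤ ·)).Pairwise (· < ·) := Y.sortedLT_sort.pairwise
  rw [hAB] at hsorted
  rw [List.pairwise_append] at hsorted
  obtain ⟨hA, hyB, hcross⟩ := hsorted
  have hBgt : ∀ b ∈ B, y < b := (List.pairwise_cons.1 hyB).1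
  have hAlt : ∀ a ∈ A, a < y := fun a ha => hcross a ha y (List.mem_cons_self ..)
  have hmemY : ∀ x ∈ Y.sort (· ≤ ·), x ∈ Y := fun x hx => (Finset.mem_sort _).1 hx
  have hfixY : ∀ x ∈ Y, x ≠ y → pl p y q y' x = x := by
    intro x hxY hxy
    exact hfix x (Finset.mem_erase.2 ⟨hxy, Finset.mem_union_right _ hxY⟩)
  have hmapY : (Y.sort (· ≤ ·)).map (pl p y q y') = A ++ y' :: B := by
    rw [hAB, List.map_append, List.map_cons]
    congr 1
    · apply list_map_fix
      intro x hx
      have hxY : x ∈ Y := hmemY x (by rw [hAB]; exact List.mem_append_left _ hx)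
      exact hfixY x hxY (hAlt x hx).ne
    · congr 1
      · exact pl_y hp_lt
      · apply list_map_fix
        intro x hx
        have hxY : x ∈ Y := hmemY x
          (by rw [hAB]; exact List.mem_append_right _ (List.mem_cons_of_mem _ hx))
        exact hfixY x hxY (hBgt x hx).ne'
  have HY : H (piMinus j Y) = altProd j false (A ++ y' :: B) := by
    rw [piMinus, altProd_hom]
    rw [altProd_congr (f := H ∘ j) (g := j ∘ pl p y q y') (Y.sort (· ≤ ·)) false
      (fun x hx => hHj x (hY (Finset.mem_coe.2 ((Finset.mem_sort _).1 hx))))]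
    rw [← altProd_map, hmapY]
  have hfinal : altProd j false (A ++ y :: B) = altProd j false (A ++ y' :: B) := by
    calc altProd j false (A ++ y :: B) = piMinus j Y := by rw [piMinus, hAB]
      _ = piMinus j X := heq.symm
      _ = H (piMinus j X) := HX.symm
      _ = H (piMinus j Y) := by rw [heq]
      _ = altProd j false (A ++ y' :: B) := HY
  have hjy : j y = j y' := altProd_cancel j A false y y' B hfinal
  have hy'01 : y' ∈ Set.Icc (0:ℝ) 1 := ⟨by linarith [hy01.1], by linarith⟩
  have hsub : (⟨y, hy01⟩ : Set.Icc (0:ℝ) 1) = ⟨y', hy'01⟩ :=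
    hj.1.injective (by exact hjy)
  have : y = y' := congrArg Subtype.val hsub
  linarith


/-- If `j : [0,1] → G` is a functorial embedding and `ℐ` a usual Cantor scheme with
`J_∅ = [0,1]`, then `z_n((0,1])` and `z_m((0,1])` are disjoint for `n ≠ m`. -/
theorem stmt5 {G : Type*} [Group G] [TopologicalSpace G] [IsTopologicalGroup G]
    (j : ℝ → G) (hj : FunctorialEmbedding j)
    (C : CantorScheme) (h0 : C.a [] = 0) (h1 : C.b [] = 1)
    {n m : ℕ} (hnm : n ≠ m) :
    Disjoint (C.z j n '' Set.Ioc (0:ℝ) 1) (C.z j m '' Set.Ioc (0:ℝ) 1) := by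
  rw [Set.disjoint_left]
  rintro g ⟨ξ, hξ, rfl⟩ ⟨η, hη, hgη⟩
  have hzn : C.z j n ξ = piMinus j (C.boundary n ξ) := by
    rw [CantorScheme.z, if_neg (not_le.2 hξ.1)]
  have hzm : C.z j m η = piMinus j (C.boundary m η) := by
    rw [CantorScheme.z, if_neg (not_le.2 hη.1)]
  have heq : piMinus j (C.boundary n ξ) = piMinus j (C.boundary m η) := by
    rw [← hzn, ← hzm, hgη]
  have hcard : (C.boundary n ξ).card ≠ (C.boundary m η).card := by
    rw [C.boundary_card n hξ.1 hξ.2, C.boundary_card m hη.1 hη.2]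
    intro h
    have := Nat.pow_right_injective (le_refl 2) h
    omega
  have hne : C.boundary n ξ ≠ C.boundary m η := fun h => hcard (by rw [h])
  have hex : ∃ y, (y ∈ C.boundary n ξ ∧ y ∉ C.boundary m η) ∨
      (y ∈ C.boundary m η ∧ y ∉ C.boundary n ξ) := by
    by_contra hcon
    push_neg at hcon
    apply hne
    apply Finset.ext
    intro x
    have := hcon x
    tauto
  obtain ⟨y, ⟨h1y, h2y⟩ | ⟨h1y, h2y⟩⟩ := hex
  · exact key_lemma j hj (C.boundary m η) (C.boundary n ξ)
      (C.boundary_subset h0 h1 m hη.1 hη.2) (C.boundary_subset h0 h1 n hξ.1 hξ.2)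
      (C.zero_mem_boundary h0 m η) (C.one_mem_boundary h1 m η)
      y h1y h2y heq.symm
  · exact key_lemma j hj (C.boundary n ξ) (C.boundary m η)
      (C.boundary_subset h0 h1 n hξ.1 hξ.2) (C.boundary_subset h0 h1 m hη.1 hη.2)
      (C.zero_mem_boundary h0 n ξ) (C.one_mem_boundary h1 n ξ)
      y h1y h2y heq
end KeyLemma
end

section
/- Let ℐ be a usual Cantor scheme, φ : ℕ → ℕ strictly increasing with φ(0) > 0, and let ℐ̃ be the derived Cantor scheme defined by J̃_∅ = J_∅ and J̃_{(s₀,…,s_n)} = J_{s₀^{φ²(0)} ⌢ s₁^{φ⁴(0)−φ²(0)} ⌢ ⋯ ⌢ s_n^{φ^{2n+2}(0)−φ^{2n}(0)}}. Suppose p ∈ ℕ and φ^{2p}(0) ≤ n < φ^{2p+1}(0). Then for every ξ > 3^{n−φ(n)}, the set ∂ℐ_{n,ξ} of endpoints of intervals in ℐ_{n,ξ} is contained in {min J_∅, max J_∅} ∪ ⋃_{s ∈ {0,1}^{≤p}} J̃^{md}_s. -/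
open Set Topology Filter

/-- The index expansion defining the derived Cantor scheme `ℐ̃`:
`(s₀,…,s_n) ↦ s₀^{φ²(0)} ⌢ s₁^{φ⁴(0)-φ²(0)} ⌢ ⋯ ⌢ s_n^{φ^{2n+2}(0)-φ^{2n}(0)}`. -/
def expandSeq (φ : ℕ → ℕ) (s : List Bool) : List Bool :=
  (List.finRange s.length).flatMap fun (k : Fin s.length) =>
    List.replicate (φ^[2 * (k : ℕ) + 2] 0 - φ^[2 * (k : ℕ)] 0) (s.get k)


open Set

namespace Stmt9Aux

variable (C : CantorScheme)

lemma a_snoc_le (t : List Bool) (c : Bool) : C.a t ≤ C.a (t ++ [c]) := by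
  cases c
  · exact (C.left_min t).ge
  · calc C.a t = C.a (t ++ [false]) := (C.left_min t).symm
    _ ≤ C.b (t ++ [false]) := (C.lt1 t).le
    _ ≤ C.a (t ++ [true]) := (C.lt2 t).le

lemma b_snoc_le (t : List Bool) (c : Bool) : C.b (t ++ [c]) ≤ C.b t := by
  cases c
  · calc C.b (t ++ [false]) ≤ C.a (t ++ [true]) := (C.lt2 t).le
    _ ≤ C.b (t ++ [true]) := (C.lt3 t).le
    _ = C.b t := C.right_max t
  · exact (C.right_max t).le

lemma a_append_le (t w : List Bool) : C.a t ≤ C.a (t ++ w) := by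
  induction w using List.reverseRecOn with
  | nil => simp
  | append_singleton w' c ih =>
      rw [← List.append_assoc]
      exact le_trans ih (a_snoc_le C _ c)

lemma b_append_le (t w : List Bool) : C.b (t ++ w) ≤ C.b t := by
  induction w using List.reverseRecOn with
  | nil => simp
  | append_singleton w' c ih =>
      rw [← List.append_assoc]
      exact le_trans (b_snoc_le C _ c) ih

lemma a_lt_b (t : List Bool) : C.a t < C.b t := by
  calc C.a t = C.a (t ++ [false]) := (C.left_min t).symm
  _ < C.b (t ++ [false]) := C.lt1 t
  _ ≤ C.b t := b_snoc_le C t false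

lemma mem_J_mono {x : ℝ} (t w : List Bool) (h : x ∈ Icc (C.a (t ++ w)) (C.b (t ++ w))) :
    x ∈ Icc (C.a t) (C.b t) :=
  ⟨le_trans (a_append_le C t w) h.1, le_trans h.2 (b_append_le C t w)⟩

lemma mem_J_root {x : ℝ} (t : List Bool) (h : x ∈ Icc (C.a t) (C.b t)) :
    x ∈ Icc (C.a []) (C.b []) := by
  have := mem_J_mono C [] t (by simpa using h)
  simpa using this

lemma a_rep_false (t : List Bool) (d : ℕ) : C.a (t ++ List.replicate d false) = C.a t := by
  induction d with
  | zero => simp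
  | succ d ih =>
      rw [List.replicate_succ' (n := d) (a := false), ← List.append_assoc, C.left_min, ih]

lemma b_rep_true (t : List Bool) (d : ℕ) : C.b (t ++ List.replicate d true) = C.b t := by
  induction d with
  | zero => simp
  | succ d ih =>
      rw [List.replicate_succ' (n := d) (a := true), ← List.append_assoc, C.right_max, ih]

lemma gap_le (t : List Bool) (d : ℕ) (hd : 0 < d) :
    C.b (t ++ List.replicate d false) ≤ C.a (t ++ List.replicate d true) := by
  obtain ⟨e, rfl⟩ := Nat.exists_eq_add_of_lt hd
  rw [zero_add, List.replicate_succ, List.replicate_succ, List.append_cons t false,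
    List.append_cons t true]
  calc C.b (t ++ [false] ++ (List.replicate e false))
      ≤ C.b (t ++ [false]) := b_append_le C _ _
    _ ≤ C.a (t ++ [true]) := (C.lt2 t).le
    _ ≤ C.a (t ++ [true] ++ List.replicate e true) := a_append_le C _ _

/-- If `x` lies in both `J_t` and `J_v` and `t` is at most as long as `v`,
then `t` is a prefix of `v`. -/
lemma prefix_of_mem (v : List Bool) (x : ℝ) (hxv : x ∈ Icc (C.a v) (C.b v)) :
    ∀ t : List Bool, t.length ≤ v.length → x ∈ Icc (C.a t) (C.b t) → t <+: v := by
  intro t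
  induction t using List.reverseRecOn with
  | nil => intro _ _; exact List.nil_prefix
  | append_singleton t'' c ih =>
      intro hlen hxt
      have h1 : t'' <+: v := by
        refine ih (le_trans ?_ hlen) (mem_J_mono C t'' [c] hxt)
        simp
      obtain ⟨r, rfl⟩ := h1
      match r with
      | [] => simp at hlen
      | c' :: r' =>
          by_cases hc : c = c'
          · exact ⟨r', by simp [hc]⟩
          · exfalso
            cases c
            · -- c = false, c' = true
              have hc' : c' = true := by
                cases c' <;> simp_all
              subst hc'
              have h2 : x ≤ C.b (t'' ++ [false]) := hxt.2
              have h3 : C.a (t'' ++ true :: r') ≤ x := hxv.1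
              rw [List.append_cons] at h3
              have h4 : C.a (t'' ++ [true]) ≤ C.a (t'' ++ [true] ++ r') := a_append_le C _ _
              exact absurd (le_trans h4 (le_trans h3 h2)) (not_le.2 (C.lt2 t''))
            · -- c = true, c' = false
              have hc' : c' = false := by
                cases c' <;> simp_all
              subst hc'
              have h2 : C.a (t'' ++ [true]) ≤ x := hxt.1
              have h3 : x ≤ C.b (t'' ++ false :: r') := hxv.2
              rw [List.append_cons] at h3
              have h4 : C.b (t'' ++ [false] ++ r') ≤ C.b (t'' ++ [false]) := b_append_le C _ _
              exact absurd (le_trans h2 (le_trans h3 h4)) (not_le.2 (C.lt2 t''))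

lemma getElem_rep_part {w : List Bool} {d : ℕ} {c : Bool} {i : ℕ} (h1 : w.length ≤ i)
    (h2 : i < (w ++ List.replicate d c).length) : (w ++ List.replicate d c)[i] = c := by
  rw [List.getElem_append_right h1]
  exact List.getElem_replicate _

end Stmt9Aux
namespace Stmt9Aux

lemma expandSeq_nil (φ : ℕ → ℕ) : expandSeq φ [] = [] := by
  simp [expandSeq]

lemma expandSeq_eq (φ : ℕ → ℕ) (n : ℕ) (l : List Bool) (h : l.length = n) :
    expandSeq φ l = (List.finRange n).flatMap
      (fun k : Fin n => List.replicate (φ^[2 * (k : ℕ) + 2] 0 - φ^[2 * (k : ℕ)] 0)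
        (l[(k : ℕ)]'(by rw [h]; exact k.isLt))) := by
  subst h
  simp [expandSeq]

lemma expandSeq_snoc (φ : ℕ → ℕ) (s : List Bool) (c : Bool) :
    expandSeq φ (s ++ [c]) =
      expandSeq φ s ++ List.replicate (φ^[2 * s.length + 2] 0 - φ^[2 * s.length] 0) c := by
  rw [expandSeq_eq φ (s.length + 1) (s ++ [c]) (by simp),
    expandSeq_eq φ s.length s rfl,
    List.finRange_succ_last, List.flatMap_append, List.flatMap_map]
  congr 1
  · apply List.flatMap_congr
    intro k _
    congr 1
    exact List.getElem_append_left k.isLt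
  · simp

lemma expandSeq_length (φ : ℕ → ℕ) (hm : ∀ k : ℕ, φ^[2 * k] 0 ≤ φ^[2 * k + 2] 0)
    (s : List Bool) : (expandSeq φ s).length = φ^[2 * s.length] 0 := by
  induction s using List.reverseRecOn with
  | nil => simp [expandSeq_nil]
  | append_singleton s' c ih =>
      rw [expandSeq_snoc, List.length_append, List.length_replicate, ih]
      have := hm s'.length
      simp only [List.length_append, List.length_singleton]
      rw [show 2 * (s'.length + 1) = 2 * s'.length + 2 from by ring]
      omega

end Stmt9Aux
namespace Stmt9Aux

variable (C : CantorScheme)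

lemma a_expand_snoc_false (φ : ℕ → ℕ) (w : List Bool) :
    C.a (expandSeq φ (w ++ [false])) = C.a (expandSeq φ w) := by
  rw [expandSeq_snoc, a_rep_false]

lemma b_expand_snoc_true (φ : ℕ → ℕ) (w : List Bool) :
    C.b (expandSeq φ (w ++ [true])) = C.b (expandSeq φ w) := by
  rw [expandSeq_snoc, b_rep_true]

lemma expand_gap_le (φ : ℕ → ℕ) (hd : ∀ k : ℕ, φ^[2 * k] 0 < φ^[2 * k + 2] 0)
    (w : List Bool) :
    C.b (expandSeq φ (w ++ [false])) ≤ C.a (expandSeq φ (w ++ [true])) := by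
  rw [expandSeq_snoc, expandSeq_snoc]
  exact gap_le C _ _ (by have := hd w.length; omega)

/-- Covering lemma: a point of `J̃_w` is either in a level-`(w.length + q)` interval
of the derived scheme or in a middle gap at an intermediate level. -/
lemma cover (φ : ℕ → ℕ) (hd : ∀ k : ℕ, φ^[2 * k] 0 < φ^[2 * k + 2] 0)
    (q : ℕ) (w : List Bool) (x : ℝ)
    (hx : x ∈ Icc (C.a (expandSeq φ w)) (C.b (expandSeq φ w))) :
    (∃ s' : List Bool, s'.length = w.length + q ∧
      x ∈ Icc (C.a (expandSeq φ s')) (C.b (expandSeq φ s'))) ∨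
    (∃ u : List Bool, u.length < w.length + q ∧
      x ∈ Icc (C.b (expandSeq φ (u ++ [false]))) (C.a (expandSeq φ (u ++ [true])))) := by
  induction q generalizing w with
  | zero => exact Or.inl ⟨w, by simp, hx⟩
  | succ q ih =>
      rcases le_or_gt x (C.b (expandSeq φ (w ++ [false]))) with h | h
      · have hx0 : x ∈ Icc (C.a (expandSeq φ (w ++ [false]))) (C.b (expandSeq φ (w ++ [false]))) :=
          ⟨(a_expand_snoc_false C φ w).symm ▸ hx.1, h⟩
        rcases ih (w ++ [false]) hx0 with ⟨s', hs1, hs2⟩ | ⟨u, hu1, hu2⟩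
        · exact Or.inl ⟨s', by simp at hs1 ⊢; omega, hs2⟩
        · exact Or.inr ⟨u, by simp at hu1 ⊢; omega, hu2⟩
      · rcases lt_or_ge x (C.a (expandSeq φ (w ++ [true]))) with h2 | h2
        · exact Or.inr ⟨w, by omega, ⟨h.le, h2.le⟩⟩
        · have hx1 : x ∈ Icc (C.a (expandSeq φ (w ++ [true]))) (C.b (expandSeq φ (w ++ [true]))) :=
            ⟨h2, (b_expand_snoc_true C φ w).symm ▸ hx.2⟩
          rcases ih (w ++ [true]) hx1 with ⟨s', hs1, hs2⟩ | ⟨u, hu1, hu2⟩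
          · exact Or.inl ⟨s', by simp at hs1 ⊢; omega, hs2⟩
          · exact Or.inr ⟨u, by simp at hu1 ⊢; omega, hu2⟩

/-- The left endpoints of derived intervals are in the target set. -/
lemma mem_target_a (φ : ℕ → ℕ) (hd : ∀ k : ℕ, φ^[2 * k] 0 < φ^[2 * k + 2] 0) (p : ℕ) :
    ∀ w : List Bool, w.length ≤ p →
      C.a (expandSeq φ w) ∈ ({C.a [], C.b []} : Set ℝ) ∪
        ⋃ s ∈ {l : List Bool | l.length ≤ p},
          Set.Icc (C.b (expandSeq φ (s ++ [false]))) (C.a (expandSeq φ (s ++ [true]))) := by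
  intro w
  induction w using List.reverseRecOn with
  | nil =>
      intro _
      rw [expandSeq_nil]
      exact Or.inl (Or.inl rfl)
  | append_singleton w' c ih =>
      intro hlen
      have hlen' : w'.length ≤ p := by simp at hlen; omega
      cases c
      · rw [a_expand_snoc_false]
        exact ih hlen'
      · refine Or.inr ?_
        refine Set.mem_iUnion₂.2 ⟨w', hlen', ?_⟩
        exact ⟨expand_gap_le C φ hd w', le_refl _⟩

/-- The right endpoints of derived intervals are in the target set. -/
lemma mem_target_b (φ : ℕ → ℕ) (hd : ∀ k : ℕ, φ^[2 * k] 0 < φ^[2 * k + 2] 0) (p : ℕ) :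
    ∀ w : List Bool, w.length ≤ p →
      C.b (expandSeq φ w) ∈ ({C.a [], C.b []} : Set ℝ) ∪
        ⋃ s ∈ {l : List Bool | l.length ≤ p},
          Set.Icc (C.b (expandSeq φ (s ++ [false]))) (C.a (expandSeq φ (s ++ [true]))) := by
  intro w
  induction w using List.reverseRecOn with
  | nil =>
      intro _
      rw [expandSeq_nil]
      exact Or.inl (Or.inr rfl)
  | append_singleton w' c ih =>
      intro hlen
      have hlen' : w'.length ≤ p := by simp at hlen; omega
      cases c
      · refine Or.inr ?_
        refine Set.mem_iUnion₂.2 ⟨w', hlen', ?_⟩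
        exact ⟨le_refl _, expand_gap_le C φ hd w'⟩
      · rw [b_expand_snoc_true]
        exact ih hlen'

end Stmt9Aux
namespace Stmt9Aux

lemma pow_inv_eq_rpow (m : ℕ) : ((3:ℝ)⁻¹) ^ m = (3:ℝ) ^ (-(m:ℝ)) := by
  rw [inv_pow, ← Real.rpow_natCast 3 m, ← Real.rpow_neg (by norm_num)]

lemma scaleIndex_bounds {ξ : ℝ} (hpos : 0 < ξ) (hξ1 : ξ ≤ 1) :
    ((3:ℝ)⁻¹) ^ (scaleIndex ξ + 1) < ξ ∧ ξ ≤ ((3:ℝ)⁻¹) ^ (scaleIndex ξ) := by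
  have hlogle : Real.logb 3 ξ ≤ 0 := Real.logb_nonpos (by norm_num) hpos.le hξ1
  have hnonneg : (0:ℝ) ≤ -Real.logb 3 ξ := by linarith
  have hfloor_le : ((scaleIndex ξ : ℕ) : ℝ) ≤ -Real.logb 3 ξ := Nat.floor_le hnonneg
  have hlt : -Real.logb 3 ξ < (scaleIndex ξ : ℝ) + 1 := by
    exact Nat.lt_floor_add_one (-Real.logb 3 ξ)
  have hxi : (3:ℝ) ^ Real.logb 3 ξ = ξ := Real.rpow_logb (by norm_num) (by norm_num) hpos
  constructor
  · rw [pow_inv_eq_rpow]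
    calc (3:ℝ) ^ (-((scaleIndex ξ + 1 : ℕ) : ℝ)) < (3:ℝ) ^ Real.logb 3 ξ := by
          apply Real.rpow_lt_rpow_of_exponent_lt (by norm_num)
          push_cast
          linarith
    _ = ξ := hxi
  · rw [pow_inv_eq_rpow]
    calc ξ = (3:ℝ) ^ Real.logb 3 ξ := hxi.symm
    _ ≤ (3:ℝ) ^ (-((scaleIndex ξ : ℕ) : ℝ)) := by
          apply Real.rpow_le_rpow_of_exponent_le (by norm_num)
          linarith

variable (C : CantorScheme)

lemma b_snoc_false_lt (t : List Bool) : C.b (t ++ [false]) < C.b t := by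
  calc C.b (t ++ [false]) < C.a (t ++ [true]) := C.lt2 t
  _ ≤ C.b t := le_of_le_of_eq (C.lt3 t).le (C.right_max t)

lemma a_snoc_true_lt (t : List Bool) : C.a t < C.a (t ++ [true]) := by
  calc C.a t = C.a (t ++ [false]) := (C.left_min t).symm
  _ < C.b (t ++ [false]) := C.lt1 t
  _ < C.a (t ++ [true]) := C.lt2 t

lemma leftMap_mem {ξ : ℝ} (hpos : 0 < ξ) (hξ1 : ξ ≤ 1) (s : List Bool) :
    C.b (s ++ List.replicate (scaleIndex ξ + 1) false ++ [false]) < C.leftMap s ξ ∧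
      C.leftMap s ξ ≤ C.b (s ++ List.replicate (scaleIndex ξ + 1) false) := by
  obtain ⟨hb0, hb1⟩ := scaleIndex_bounds hpos hξ1
  set d := scaleIndex ξ with hd
  have hval : C.leftMap s ξ = C.b (s ++ List.replicate (d + 2) false) +
      (ξ - ((3:ℝ)⁻¹) ^ (d + 1)) / (((3:ℝ)⁻¹) ^ d - ((3:ℝ)⁻¹) ^ (d + 1)) *
        (C.b (s ++ List.replicate (d + 1) false) - C.b (s ++ List.replicate (d + 2) false)) := by
    simp only [CantorScheme.leftMap, if_neg (not_le.2 hpos), hd]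
  have hrep : s ++ List.replicate (d + 2) false =
      (s ++ List.replicate (d + 1) false) ++ [false] := by
    rw [List.replicate_succ' (n := d+1) (a := false), List.append_assoc]
  have hx01 : ((3:ℝ)⁻¹) ^ (d + 1) < ((3:ℝ)⁻¹) ^ d :=
    pow_lt_pow_right_of_lt_one₀ (by norm_num) (by norm_num) (Nat.lt_succ_self d)
  have hcpos : 0 < (ξ - ((3:ℝ)⁻¹) ^ (d + 1)) / (((3:ℝ)⁻¹) ^ d - ((3:ℝ)⁻¹) ^ (d + 1)) :=
    div_pos (by linarith) (by linarith)
  have hcle : (ξ - ((3:ℝ)⁻¹) ^ (d + 1)) / (((3:ℝ)⁻¹) ^ d - ((3:ℝ)⁻¹) ^ (d + 1)) ≤ 1 := by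
    rw [div_le_one (by linarith)]
    linarith
  have hy01 : C.b (s ++ List.replicate (d + 2) false) <
      C.b (s ++ List.replicate (d + 1) false) := by
    rw [hrep]
    exact b_snoc_false_lt C _
  constructor
  · rw [hval, ← hrep]
    nlinarith
  · rw [hval]
    nlinarith

lemma rightMap_mem {ξ : ℝ} (hpos : 0 < ξ) (hξ1 : ξ ≤ 1) (s : List Bool) :
    C.a (s ++ List.replicate (scaleIndex ξ + 1) true) ≤ C.rightMap s ξ ∧
      C.rightMap s ξ < C.a (s ++ List.replicate (scaleIndex ξ + 1) true ++ [true]) := by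
  obtain ⟨hb0, hb1⟩ := scaleIndex_bounds hpos hξ1
  set d := scaleIndex ξ with hd
  have hval : C.rightMap s ξ = C.a (s ++ List.replicate (d + 2) true) +
      (ξ - ((3:ℝ)⁻¹) ^ (d + 1)) / (((3:ℝ)⁻¹) ^ d - ((3:ℝ)⁻¹) ^ (d + 1)) *
        (C.a (s ++ List.replicate (d + 1) true) - C.a (s ++ List.replicate (d + 2) true)) := by
    simp only [CantorScheme.rightMap, if_neg (not_le.2 hpos), hd]
  have hrep : s ++ List.replicate (d + 2) true =
      (s ++ List.replicate (d + 1) true) ++ [true] := by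
    rw [List.replicate_succ' (n := d+1) (a := true), List.append_assoc]
  have hx01 : ((3:ℝ)⁻¹) ^ (d + 1) < ((3:ℝ)⁻¹) ^ d :=
    pow_lt_pow_right_of_lt_one₀ (by norm_num) (by norm_num) (Nat.lt_succ_self d)
  have hcpos : 0 < (ξ - ((3:ℝ)⁻¹) ^ (d + 1)) / (((3:ℝ)⁻¹) ^ d - ((3:ℝ)⁻¹) ^ (d + 1)) :=
    div_pos (by linarith) (by linarith)
  have hcle : (ξ - ((3:ℝ)⁻¹) ^ (d + 1)) / (((3:ℝ)⁻¹) ^ d - ((3:ℝ)⁻¹) ^ (d + 1)) ≤ 1 := by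
    rw [div_le_one (by linarith)]
    linarith
  have hy01 : C.a (s ++ List.replicate (d + 1) true) <
      C.a (s ++ List.replicate (d + 2) true) := by
    rw [hrep]
    exact a_snoc_true_lt C _
  constructor
  · rw [hval]
    nlinarith
  · rw [hval, ← hrep]
    nlinarith

end Stmt9Aux

open Stmt9Aux

/-- If `φ^{2p}(0) ≤ n < φ^{2p+1}(0)` then for every `ξ > 3^{n - φ n}` (with `ξ ≤ 1`),
the set `∂ℐ_{n,ξ}` is contained in `{min J_∅, max J_∅}` together with the union of the
middle-gap intervals `J̃^{md}_s` of the derived scheme, over sequences `s` of length `≤ p`. -/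
theorem stmt9 (C : CantorScheme) (φ : ℕ → ℕ) (hφ : StrictMono φ) (hφ0 : 0 < φ 0)
    (p n : ℕ) (hn1 : φ^[2 * p] 0 ≤ n) (hn2 : n < φ^[2 * p + 1] 0)
    (ξ : ℝ) (hξ : (3:ℝ) ^ ((n : ℤ) - (φ n : ℤ)) < ξ) (hξ1 : ξ ≤ 1) :
    ↑(C.boundary n ξ) ⊆ ({C.a [], C.b []} : Set ℝ) ∪
      ⋃ s ∈ {l : List Bool | l.length ≤ p},
        Set.Icc (C.b (expandSeq φ (s ++ [false]))) (C.a (expandSeq φ (s ++ [true]))) := by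

  have hlt : ∀ x : ℕ, x < φ x := by
    intro x
    induction x with
    | zero => exact hφ0
    | succ x ih =>
        have h := hφ (Nat.lt_succ_self x)
        simp only [Nat.succ_eq_add_one] at h ⊢
        omega
  have hd : ∀ k : ℕ, φ^[2 * k] 0 < φ^[2 * k + 2] 0 := by
    intro k
    have h1 : φ^[2 * k + 1] 0 = φ (φ^[2 * k] 0) := Function.iterate_succ_apply' φ _ 0
    have h2 : φ^[2 * k + 2] 0 = φ (φ^[2 * k + 1] 0) := Function.iterate_succ_apply' φ _ 0
    have := hlt (φ^[2 * k] 0); have := hlt (φ^[2 * k + 1] 0); omega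
  have hm : ∀ k : ℕ, φ^[2 * k] 0 ≤ φ^[2 * k + 2] 0 := fun k => (hd k).le
  have hφnL : φ n < φ^[2 * p + 2] 0 := by
    have h2 : φ^[2 * p + 2] 0 = φ (φ^[2 * p + 1] 0) := Function.iterate_succ_apply' φ _ 0
    rw [h2]; exact hφ hn2
  have hnφ : n < φ n := hlt n
  have hξpos : (0:ℝ) < ξ := lt_trans (zpow_pos (by norm_num) _) hξ
  -- scale index bound
  have hklt : scaleIndex ξ < φ n - n := by
    have hlogle : Real.logb 3 ξ ≤ 0 := Real.logb_nonpos (by norm_num) hξpos.le hξ1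
    have hnonneg : (0:ℝ) ≤ -Real.logb 3 ξ := by linarith
    rw [scaleIndex, Nat.floor_lt hnonneg]
    have h1 : Real.logb 3 ((3:ℝ) ^ ((n : ℤ) - (φ n : ℤ))) < Real.logb 3 ξ :=
      Real.logb_lt_logb (by norm_num) (zpow_pos (by norm_num) _) hξ
    have h2 : Real.logb 3 ((3:ℝ) ^ ((n : ℤ) - (φ n : ℤ))) = ((n:ℝ) - (φ n : ℝ)) := by
      rw [← Real.rpow_intCast 3 ((n : ℤ) - (φ n : ℤ)),
        Real.logb_rpow (by norm_num) (by norm_num)]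
      push_cast; ring
    rw [h2] at h1
    have : ((φ n - n : ℕ) : ℝ) = (φ n : ℝ) - (n : ℝ) := by
      push_cast [Nat.cast_sub hnφ.le]; ring
    rw [this]
    linarith
  -- unpack membership
  intro x hx
  simp only [CantorScheme.boundary, Finset.coe_image, Finset.coe_univ, Set.image_univ,
    Set.mem_range] at hx
  obtain ⟨⟨f, i⟩, rfl⟩ := hx
  set s : List Bool := List.ofFn f with hs
  have hslen : s.length = n := by simp [hs]
  have hLlen : ∀ s' : List Bool, s'.length = p + 1 →
      (expandSeq φ s').length = φ^[2 * p + 2] 0 := by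
    intro s' h
    rw [expandSeq_length φ hm, h, show 2 * (p + 1) = 2 * p + 2 from by ring]
  fin_cases i
  · -- x = C.a s
    simp only [Matrix.cons_val_zero]
    have hmem : C.a s ∈ Set.Icc (C.a s) (C.b s) := ⟨le_refl _, (a_lt_b C s).le⟩
    rcases cover C φ hd (p + 1) [] (C.a s)
        (by rw [expandSeq_nil]; exact mem_J_root C s hmem) with
      ⟨s', hs'len, hs'mem⟩ | ⟨u, hulen, humem⟩
    · simp only [List.length_nil, zero_add] at hs'len
      have hvlen : (expandSeq φ s').length = φ^[2 * p + 2] 0 := hLlen s' hs'len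
      have hpre : s <+: expandSeq φ s' :=
        prefix_of_mem C _ _ hs'mem s (by rw [hvlen, hslen]; omega) hmem
      obtain ⟨r, hr⟩ := hpre
      have hrne : r ≠ [] := by
        intro h
        subst h
        rw [List.append_nil] at hr
        have := congrArg List.length hr
        rw [hslen, hvlen] at this
        omega
      obtain ⟨cr, r', rfl⟩ := List.exists_cons_of_ne_nil hrne
      have hcr : cr = false := by
        by_contra h
        have hcr' : cr = true := by cases cr <;> simp_all
        subst hcr'
        have h3 : C.a (expandSeq φ s') ≤ C.a s := hs'mem.1
        rw [← hr, show s ++ true :: r' = s ++ [true] ++ r' from by simp] at h3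
        have h4 : C.a (s ++ [true]) ≤ C.a (s ++ [true] ++ r') := a_append_le C _ _
        have h5 := C.lt2 s
        have h6 := C.lt1 s
        have h7 := C.left_min s
        linarith
      subst hcr
      rcases List.eq_nil_or_concat s' with h | ⟨s'', cl, hcat⟩
      · subst h; simp at hs'len
      rw [List.concat_eq_append] at hcat
      subst hcat
      have hs''len : s''.length = p := by
        rw [List.length_append, List.length_singleton] at hs'len
        omega
      have hEdecomp : expandSeq φ (s'' ++ [cl]) = expandSeq φ s'' ++
          List.replicate (φ^[2 * s''.length + 2] 0 - φ^[2 * s''.length] 0) cl :=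
        expandSeq_snoc φ s'' cl
      have hE''len : (expandSeq φ s'').length = φ^[2 * p] 0 := by
        rw [expandSeq_length φ hm, hs''len]
      have hidx : n < (expandSeq φ (s'' ++ [cl])).length := by
        rw [hvlen]; omega
      have h1 : (expandSeq φ (s'' ++ [cl]))[n]'hidx = false := by
        rw [List.getElem_of_eq hr.symm hidx,
          List.getElem_append_right (by omega : s.length ≤ n)]
        simp [hslen]
      have h2 : (expandSeq φ (s'' ++ [cl]))[n]'hidx = cl :=
        (List.getElem_of_eq hEdecomp hidx).trans
          (getElem_rep_part (by rw [hE''len]; exact hn1) (by rw [← hEdecomp]; exact hidx))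
      have hcl : cl = false := h2.symm.trans h1
      subst hcl
      have hxeq : C.a s = C.a (expandSeq φ s'') := by
        have h5 : C.a s ≤ C.a (expandSeq φ (s'' ++ [false])) := by
          rw [← hr]; exact a_append_le C s _
        have h6 : C.a (expandSeq φ (s'' ++ [false])) ≤ C.a s := hs'mem.1
        have h7 : C.a (expandSeq φ (s'' ++ [false])) = C.a (expandSeq φ s'') :=
          a_expand_snoc_false C φ s''
        linarith
      rw [hxeq]
      exact mem_target_a C φ hd p s'' (le_of_eq hs''len)
    · refine Or.inr (Set.mem_iUnion₂.2 ⟨u, ?_, humem⟩)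
      simp only [List.length_nil, zero_add] at hulen
      simpa using Nat.lt_succ_iff.1 hulen
  · -- x = C.leftMap s ξ
    simp only [Matrix.cons_val_one, Matrix.head_cons]
    obtain ⟨hlb, hub⟩ := leftMap_mem C hξpos hξ1 s
    have htlen : (s ++ List.replicate (scaleIndex ξ + 1) false).length
        = n + (scaleIndex ξ + 1) := by
      rw [List.length_append, List.length_replicate, hslen]
    have hxJt : C.leftMap s ξ ∈ Set.Icc (C.a (s ++ List.replicate (scaleIndex ξ + 1) false))
        (C.b (s ++ List.replicate (scaleIndex ξ + 1) false)) := by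
      constructor
      · have h1 := (C.left_min (s ++ List.replicate (scaleIndex ξ + 1) false)).symm
        have h2 := C.lt1 (s ++ List.replicate (scaleIndex ξ + 1) false)
        linarith
      · exact hub
    rcases cover C φ hd (p + 1) [] (C.leftMap s ξ)
        (by rw [expandSeq_nil]; exact mem_J_root C _ hxJt) with
      ⟨s', hs'len, hs'mem⟩ | ⟨u, hulen, humem⟩
    · simp only [List.length_nil, zero_add] at hs'len
      have hvlen := hLlen s' hs'len
      have hpre : (s ++ List.replicate (scaleIndex ξ + 1) false) <+: expandSeq φ s' :=
        prefix_of_mem C _ _ hs'mem _ (by rw [hvlen, htlen]; omega) hxJt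
      obtain ⟨r, hr⟩ := hpre
      have hrne : r ≠ [] := by
        intro h; subst h; rw [List.append_nil] at hr
        have := congrArg List.length hr
        rw [htlen, hvlen] at this
        omega
      obtain ⟨cr, r', rfl⟩ := List.exists_cons_of_ne_nil hrne
      have hcr : cr = true := by
        by_contra h
        have hcr' : cr = false := by cases cr <;> simp_all
        subst hcr'
        have h3 : C.leftMap s ξ ≤ C.b (expandSeq φ s') := hs'mem.2
        rw [← hr, show s ++ List.replicate (scaleIndex ξ + 1) false ++ false :: r'
            = (s ++ List.replicate (scaleIndex ξ + 1) false ++ [false]) ++ r' from by simp] at h3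
        have h4 : C.b ((s ++ List.replicate (scaleIndex ξ + 1) false ++ [false]) ++ r')
            ≤ C.b (s ++ List.replicate (scaleIndex ξ + 1) false ++ [false]) := b_append_le C _ _
        linarith
      subst hcr
      rcases List.eq_nil_or_concat s' with h | ⟨s'', cl, hcat⟩
      · subst h; simp at hs'len
      rw [List.concat_eq_append] at hcat
      subst hcat
      have hs''len : s''.length = p := by
        rw [List.length_append, List.length_singleton] at hs'len; omega
      have hEdecomp := expandSeq_snoc φ s'' cl
      have hE''len : (expandSeq φ s'').length = φ^[2 * p] 0 := by
        rw [expandSeq_length φ hm, hs''len]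
      have hr' : expandSeq φ (s'' ++ [cl])
          = s ++ (List.replicate (scaleIndex ξ + 1) false ++ true :: r') := by
        rw [← hr, List.append_assoc]
      have hidx1 : n + scaleIndex ξ < (expandSeq φ (s'' ++ [cl])).length := by
        rw [hvlen]; omega
      have hidx2 : n + scaleIndex ξ + 1 < (expandSeq φ (s'' ++ [cl])).length := by
        rw [hvlen]; omega
      have h1 : (expandSeq φ (s'' ++ [cl]))[n + scaleIndex ξ]'hidx1 = false := by
        rw [List.getElem_of_eq hr' hidx1,
          List.getElem_append_right (by omega : s.length ≤ n + scaleIndex ξ),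
          List.getElem_append_left
            (by simp only [List.length_replicate, hslen]; omega)]
        exact List.getElem_replicate _
      have h2 : (expandSeq φ (s'' ++ [cl]))[n + scaleIndex ξ + 1]'hidx2 = true := by
        rw [List.getElem_of_eq hr' hidx2,
          List.getElem_append_right (by omega : s.length ≤ n + scaleIndex ξ + 1),
          List.getElem_append_right
            (by simp only [List.length_replicate, hslen]; omega)]
        simp only [hslen, List.length_replicate]
        simp only [show n + scaleIndex ξ + 1 - n - (scaleIndex ξ + 1) = 0 from by omega,
          List.getElem_cons_zero]
      have hc1 : cl = false :=
        ((List.getElem_of_eq hEdecomp hidx1).trans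
          (getElem_rep_part (by rw [hE''len]; omega)
            (by rw [← hEdecomp]; exact hidx1))).symm.trans h1
      have hc2 : cl = true :=
        ((List.getElem_of_eq hEdecomp hidx2).trans
          (getElem_rep_part (by rw [hE''len]; omega)
            (by rw [← hEdecomp]; exact hidx2))).symm.trans h2
      rw [hc1] at hc2
      exact absurd hc2 (by simp)
    · refine Or.inr (Set.mem_iUnion₂.2 ⟨u, ?_, humem⟩)
      simp only [List.length_nil, zero_add] at hulen
      simpa using Nat.lt_succ_iff.1 hulen
  · -- x = C.rightMap s ξ
    simp only [Matrix.cons_val_two, Matrix.tail_cons, Matrix.head_cons]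
    obtain ⟨hlb, hub⟩ := rightMap_mem C hξpos hξ1 s
    have htlen : (s ++ List.replicate (scaleIndex ξ + 1) true).length
        = n + (scaleIndex ξ + 1) := by
      rw [List.length_append, List.length_replicate, hslen]
    have hxJt : C.rightMap s ξ ∈ Set.Icc (C.a (s ++ List.replicate (scaleIndex ξ + 1) true))
        (C.b (s ++ List.replicate (scaleIndex ξ + 1) true)) := by
      constructor
      · exact hlb
      · have h1 := C.right_max (s ++ List.replicate (scaleIndex ξ + 1) true)
        have h2 := C.lt3 (s ++ List.replicate (scaleIndex ξ + 1) true)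
        linarith
    rcases cover C φ hd (p + 1) [] (C.rightMap s ξ)
        (by rw [expandSeq_nil]; exact mem_J_root C _ hxJt) with
      ⟨s', hs'len, hs'mem⟩ | ⟨u, hulen, humem⟩
    · simp only [List.length_nil, zero_add] at hs'len
      have hvlen := hLlen s' hs'len
      have hpre : (s ++ List.replicate (scaleIndex ξ + 1) true) <+: expandSeq φ s' :=
        prefix_of_mem C _ _ hs'mem _ (by rw [hvlen, htlen]; omega) hxJt
      obtain ⟨r, hr⟩ := hpre
      have hrne : r ≠ [] := by
        intro h; subst h; rw [List.append_nil] at hr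
        have := congrArg List.length hr
        rw [htlen, hvlen] at this
        omega
      obtain ⟨cr, r', rfl⟩ := List.exists_cons_of_ne_nil hrne
      have hcr : cr = false := by
        by_contra h
        have hcr' : cr = true := by cases cr <;> simp_all
        subst hcr'
        have h3 : C.a (expandSeq φ s') ≤ C.rightMap s ξ := hs'mem.1
        rw [← hr, show s ++ List.replicate (scaleIndex ξ + 1) true ++ true :: r'
            = (s ++ List.replicate (scaleIndex ξ + 1) true ++ [true]) ++ r' from by simp] at h3
        have h4 : C.a (s ++ List.replicate (scaleIndex ξ + 1) true ++ [true])
            ≤ C.a ((s ++ List.replicate (scaleIndex ξ + 1) true ++ [true]) ++ r') :=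
          a_append_le C _ _
        linarith
      subst hcr
      rcases List.eq_nil_or_concat s' with h | ⟨s'', cl, hcat⟩
      · subst h; simp at hs'len
      rw [List.concat_eq_append] at hcat
      subst hcat
      have hs''len : s''.length = p := by
        rw [List.length_append, List.length_singleton] at hs'len; omega
      have hEdecomp := expandSeq_snoc φ s'' cl
      have hE''len : (expandSeq φ s'').length = φ^[2 * p] 0 := by
        rw [expandSeq_length φ hm, hs''len]
      have hr' : expandSeq φ (s'' ++ [cl])
          = s ++ (List.replicate (scaleIndex ξ + 1) true ++ false :: r') := by
        rw [← hr, List.append_assoc]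
      have hidx1 : n + scaleIndex ξ < (expandSeq φ (s'' ++ [cl])).length := by
        rw [hvlen]; omega
      have hidx2 : n + scaleIndex ξ + 1 < (expandSeq φ (s'' ++ [cl])).length := by
        rw [hvlen]; omega
      have h1 : (expandSeq φ (s'' ++ [cl]))[n + scaleIndex ξ]'hidx1 = true := by
        rw [List.getElem_of_eq hr' hidx1,
          List.getElem_append_right (by omega : s.length ≤ n + scaleIndex ξ),
          List.getElem_append_left
            (by simp only [List.length_replicate, hslen]; omega)]
        exact List.getElem_replicate _
      have h2 : (expandSeq φ (s'' ++ [cl]))[n + scaleIndex ξ + 1]'hidx2 = false := by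
        rw [List.getElem_of_eq hr' hidx2,
          List.getElem_append_right (by omega : s.length ≤ n + scaleIndex ξ + 1),
          List.getElem_append_right
            (by simp only [List.length_replicate, hslen]; omega)]
        simp only [hslen, List.length_replicate]
        simp only [show n + scaleIndex ξ + 1 - n - (scaleIndex ξ + 1) = 0 from by omega,
          List.getElem_cons_zero]
      have hc1 : cl = true :=
        ((List.getElem_of_eq hEdecomp hidx1).trans
          (getElem_rep_part (by rw [hE''len]; omega)
            (by rw [← hEdecomp]; exact hidx1))).symm.trans h1
      have hc2 : cl = false :=
        ((List.getElem_of_eq hEdecomp hidx2).trans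
          (getElem_rep_part (by rw [hE''len]; omega)
            (by rw [← hEdecomp]; exact hidx2))).symm.trans h2
      rw [hc1] at hc2
      exact absurd hc2 (by simp)
    · refine Or.inr (Set.mem_iUnion₂.2 ⟨u, ?_, humem⟩)
      simp only [List.length_nil, zero_add] at hulen
      simpa using Nat.lt_succ_iff.1 hulen
  · -- x = C.b s
    simp only [Matrix.cons_val_three, Matrix.tail_cons, Matrix.head_cons]
    have hmem : C.b s ∈ Set.Icc (C.a s) (C.b s) := ⟨(a_lt_b C s).le, le_refl _⟩
    rcases cover C φ hd (p + 1) [] (C.b s)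
        (by rw [expandSeq_nil]; exact mem_J_root C s hmem) with
      ⟨s', hs'len, hs'mem⟩ | ⟨u, hulen, humem⟩
    · simp only [List.length_nil, zero_add] at hs'len
      have hvlen : (expandSeq φ s').length = φ^[2 * p + 2] 0 := hLlen s' hs'len
      have hpre : s <+: expandSeq φ s' :=
        prefix_of_mem C _ _ hs'mem s (by rw [hvlen, hslen]; omega) hmem
      obtain ⟨r, hr⟩ := hpre
      have hrne : r ≠ [] := by
        intro h
        subst h
        rw [List.append_nil] at hr
        have := congrArg List.length hr
        rw [hslen, hvlen] at this
        omega
      obtain ⟨cr, r', rfl⟩ := List.exists_cons_of_ne_nil hrne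
      have hcr : cr = true := by
        by_contra h
        have hcr' : cr = false := by cases cr <;> simp_all
        subst hcr'
        have h3 : C.b s ≤ C.b (expandSeq φ s') := hs'mem.2
        rw [← hr, show s ++ false :: r' = s ++ [false] ++ r' from by simp] at h3
        have h4 : C.b (s ++ [false] ++ r') ≤ C.b (s ++ [false]) := b_append_le C _ _
        have h5 := C.lt2 s
        have h6 := C.lt3 s
        have h7 := C.right_max s
        linarith
      subst hcr
      rcases List.eq_nil_or_concat s' with h | ⟨s'', cl, hcat⟩
      · subst h; simp at hs'len
      rw [List.concat_eq_append] at hcat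
      subst hcat
      have hs''len : s''.length = p := by
        rw [List.length_append, List.length_singleton] at hs'len
        omega
      have hEdecomp := expandSeq_snoc φ s'' cl
      have hE''len : (expandSeq φ s'').length = φ^[2 * p] 0 := by
        rw [expandSeq_length φ hm, hs''len]
      have hidx : n < (expandSeq φ (s'' ++ [cl])).length := by
        rw [hvlen]; omega
      have h1 : (expandSeq φ (s'' ++ [cl]))[n]'hidx = true := by
        rw [List.getElem_of_eq hr.symm hidx,
          List.getElem_append_right (by omega : s.length ≤ n)]
        simp [hslen]
      have h2 : (expandSeq φ (s'' ++ [cl]))[n]'hidx = cl :=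
        (List.getElem_of_eq hEdecomp hidx).trans
          (getElem_rep_part (by rw [hE''len]; exact hn1) (by rw [← hEdecomp]; exact hidx))
      have hcl : cl = true := h2.symm.trans h1
      subst hcl
      have hxeq : C.b s = C.b (expandSeq φ s'') := by
        have h5 : C.b (expandSeq φ (s'' ++ [true])) ≤ C.b s := by
          rw [← hr]; exact b_append_le C s _
        have h6 : C.b s ≤ C.b (expandSeq φ (s'' ++ [true])) := hs'mem.2
        have h7 : C.b (expandSeq φ (s'' ++ [true])) = C.b (expandSeq φ s'') :=
          b_expand_snoc_true C φ s''
        linarith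
      rw [hxeq]
      exact mem_target_b C φ hd p s'' (le_of_eq hs''len)
    · refine Or.inr (Set.mem_iUnion₂.2 ⟨u, ?_, humem⟩)
      simp only [List.length_nil, zero_add] at hulen
      simpa using Nat.lt_succ_iff.1 hulen
end
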